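/- In the thresholded PPA with threshold α ∈ [0,1), define PPI_i^α using only indices j with |R_{i,j}| > α (the diagonal j = i always included since R_{i,i} = 1 > α). If all pairwise importances satisfy |PI_{i,j}| ≤ C, then |PPI_i^α − PPI_i^0| ≤ 2C·(Σ_{j: 0 < |R_{i,j}| ≤ α} |R_{i,j}|) / (Σ_j included in PPI_i^0 |R_{i,j}|). -/

import Mathlib

open Finset

/-- Error bound for the thresholded pairwise permutation importance: dropping
the pairs with correlation at most `α` changes the PPI by at most
`2C · (discarded correlation mass) / (total correlation mass)`. -/
theorem thresholded_PPI_error_bound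
    {M : ℕ} (R : Matrix (Fin M) (Fin M) ℝ) (PI : Fin M → Fin M → ℝ)
    (i : Fin M) (hdiag : R i i = 1)
    (α : ℝ) (hα : α ∈ Set.Ico (0 : ℝ) 1)
    (C : ℝ) (hC : ∀ j, |PI i j| ≤ C) :
    |(∑ j ∈ univ.filter (fun j => α < |R i j|), |R i j| * PI i j) /
        (∑ j ∈ univ.filter (fun j => α < |R i j|), |R i j|) -
      (∑ j ∈ univ.filter (fun j => (0 : ℝ) < |R i j|), |R i j| * PI i j) /
        (∑ j ∈ univ.filter (fun j => (0 : ℝ) < |R i j|), |R i j|)|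
    ≤ 2 * C *
        (∑ j ∈ univ.filter (fun j => (0 : ℝ) < |R i j| ∧ |R i j| ≤ α), |R i j|) /
        (∑ j ∈ univ.filter (fun j => (0 : ℝ) < |R i j|), |R i j|) := by
  obtain ⟨hα0, hα1⟩ := hα
  set S := univ.filter (fun j => α < |R i j|) with hSdef
  set T := univ.filter (fun j => (0 : ℝ) < |R i j|) with hTdef
  set D := univ.filter (fun j => (0 : ℝ) < |R i j| ∧ |R i j| ≤ α) with hDdef
  have hC0 : 0 ≤ C := le_trans (abs_nonneg _) (hC i)
  set A := ∑ j ∈ S, |R i j| * PI i j with hAdef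
  set a := ∑ j ∈ S, |R i j| with hadef
  set E := ∑ j ∈ D, |R i j| * PI i j with hEdef
  set d := ∑ j ∈ D, |R i j| with hddef
  have hiS : i ∈ S := by
    simp only [hSdef, mem_filter, mem_univ, true_and, hdiag, abs_one]
    exact hα1
  have ha1 : (1 : ℝ) ≤ a := by
    have := Finset.single_le_sum (f := fun j => |R i j|)
      (fun j _ => abs_nonneg _) hiS
    simpa [hdiag] using this
  have ha0 : (0 : ℝ) < a := lt_of_lt_of_le one_pos ha1
  have hd0 : (0 : ℝ) ≤ d := Finset.sum_nonneg fun j _ => abs_nonneg _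
  have hsplit : ∀ f : Fin M → ℝ, ∑ j ∈ T, f j = ∑ j ∈ S, f j + ∑ j ∈ D, f j := by
    intro f
    have hS' : S = T.filter (fun j => α < |R i j|) := by
      ext j
      simp only [hSdef, hTdef, mem_filter, mem_univ, true_and, and_comm]
      constructor
      · intro h; exact ⟨h, lt_of_le_of_lt hα0 h⟩
      · exact fun h => h.1
    have hD' : D = T.filter (fun j => ¬ α < |R i j|) := by
      ext j
      simp only [hDdef, hTdef, mem_filter, mem_univ, true_and, not_lt]
    rw [hS', hD', Finset.sum_filter_add_sum_filter_not]
  have hTsum : ∑ j ∈ T, |R i j| * PI i j = A + E := hsplit _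
  have hbsum : ∑ j ∈ T, |R i j| = a + d := hsplit _
  have hb0 : (0 : ℝ) < a + d := by linarith
  rw [hTsum, hbsum]
  have hAle : |A| ≤ C * a := by
    calc |A| ≤ ∑ j ∈ S, |(|R i j| * PI i j)| := Finset.abs_sum_le_sum_abs _ _
      _ ≤ ∑ j ∈ S, C * |R i j| := by
          refine Finset.sum_le_sum fun j _ => ?_
          rw [abs_mul, abs_abs, mul_comm]
          exact mul_le_mul_of_nonneg_right (hC j) (abs_nonneg _)
      _ = C * a := by rw [hadef, Finset.mul_sum]
  have hEle : |E| ≤ C * d := by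
    calc |E| ≤ ∑ j ∈ D, |(|R i j| * PI i j)| := Finset.abs_sum_le_sum_abs _ _
      _ ≤ ∑ j ∈ D, C * |R i j| := by
          refine Finset.sum_le_sum fun j _ => ?_
          rw [abs_mul, abs_abs, mul_comm]
          exact mul_le_mul_of_nonneg_right (hC j) (abs_nonneg _)
      _ = C * d := by rw [hddef, Finset.mul_sum]
  have key : A / a - (A + E) / (a + d) = (A * d - E * a) / (a * (a + d)) := by
    field_simp
    ring
  rw [key]
  have habpos : (0 : ℝ) < a * (a + d) := mul_pos ha0 hb0
  rw [abs_div, abs_of_pos habpos]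
  have hnum : |A * d - E * a| ≤ 2 * C * a * d := by
    calc |A * d - E * a| ≤ |A * d| + |E * a| := abs_sub _ _
      _ = |A| * d + |E| * a := by
          rw [abs_mul, abs_mul, abs_of_nonneg hd0, abs_of_pos ha0]
      _ ≤ C * a * d + C * d * a := by gcongr
      _ = 2 * C * a * d := by ring
  have hrw : 2 * C * d / (a + d) = 2 * C * a * d / (a * (a + d)) := by
    rw [eq_div_iff (ne_of_gt habpos)]
    field_simp
  rw [hrw]
  gcongr
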